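/- Let (Ω, μ) be a finite measure space, 0 < f₋ < f̄ < f₊ real constants, V = μ(Ω)·(f̄ − f₋)/(f₊ − f₋), and B = { f measurable : f₋ ≤ f ≤ f₊ μ-a.e. and ∫_Ω f dμ = f̄·μ(Ω) }. Let ĝ : Ω → ℝ be integrable with all level sets null (μ({ĝ = s}) = 0 for every s ∈ ℝ), and set c = sup{ s ∈ ℝ : μ({x : ĝ(x) ≥ s}) ≥ V } and D̂ = {x ∈ Ω : ĝ(x) ≥ c}. If f̂ ∈ B satisfies ∫_Ω f ĝ dμ ≤ ∫_Ω f̂ ĝ dμ for every f ∈ B, then f̂ = f₋ + (f₊ − f₋)·χ_{D̂} μ-almost everywhere; in particular f̂ is a bang–bang function in the admissible class A. -/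

import Mathlib

open MeasureTheory

/-- Part (ii) of the RARM stationarity theorem: let `B` be the relaxed admissible set of
two-phase densities with prescribed mean `f̄`, let `V = μ(Ω)(f̄ − f₋)/(f₊ − f₋)`, let
`ĝ` be integrable with all level sets null, `c = sup{s : μ{ĝ ≥ s} ≥ V}` and
`D̂ = {ĝ ≥ c}`. If `f̂ ∈ B` maximizes `f ↦ ∫ f ĝ dμ` over `B`, then
`f̂ = f₋ + (f₊ − f₋)χ_{D̂}` `μ`-a.e.; in particular `f̂` is bang–bang. -/
theorem rarm_maximizer_is_bang_bang {Ω : Type*} [MeasurableSpace Ω] (μ : Measure Ω)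
    [IsFiniteMeasure μ]
    (fm fbar fp : ℝ) (h1 : 0 < fm) (h2 : fm < fbar) (h3 : fbar < fp)
    (V : ℝ) (hV : V = (μ Set.univ).toReal * (fbar - fm) / (fp - fm))
    (B : Set (Ω → ℝ))
    (hB : B = {f | Measurable f ∧ (∀ᵐ x ∂μ, fm ≤ f x ∧ f x ≤ fp) ∧
      ∫ x, f x ∂μ = fbar * (μ Set.univ).toReal})
    (ghat : Ω → ℝ) (hg : Integrable ghat μ)
    (hlevel : ∀ s : ℝ, μ {x | ghat x = s} = 0)
    (c : ℝ) (hc : c = sSup {s : ℝ | ENNReal.ofReal V ≤ μ {x | s ≤ ghat x}})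
    (Dhat : Set Ω) (hD : Dhat = {x | c ≤ ghat x})
    (fhat : Ω → ℝ) (hfhat : fhat ∈ B)
    (hmax : ∀ f ∈ B, ∫ x, f x * ghat x ∂μ ≤ ∫ x, fhat x * ghat x ∂μ) :
    ∀ᵐ x ∂μ, fhat x = fm + (fp - fm) * Dhat.indicator 1 x := by
  classical
  rcases eq_or_ne (μ Set.univ) 0 with h0 | h0
  · have hμ0 : μ = 0 := Measure.measure_univ_eq_zero.mp h0
    simp [hμ0]
  -- basic positivity facts
  have hμtop : μ Set.univ ≠ ⊤ := measure_ne_top μ _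
  have hMpos : 0 < (μ Set.univ).toReal := ENNReal.toReal_pos h0 hμtop
  have hfmfp : (0:ℝ) < fp - fm := by linarith
  have hVpos : 0 < V := by
    rw [hV]
    exact div_pos (mul_pos hMpos (by linarith)) hfmfp
  have hVltM : V < (μ Set.univ).toReal := by
    rw [hV, div_lt_iff₀ hfmfp]
    nlinarith
  have hVlt : ENNReal.ofReal V < μ Set.univ := by
    calc ENNReal.ofReal V < ENNReal.ofReal (μ Set.univ).toReal := by
          exact (ENNReal.ofReal_lt_ofReal_iff hMpos).mpr hVltM
      _ = μ Set.univ := ENNReal.ofReal_toReal hμtop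
  -- a measurable representative of ghat
  obtain ⟨g, hgm, hgg⟩ : ∃ g : Ω → ℝ, Measurable g ∧ ghat =ᵐ[μ] g :=
    ⟨hg.aemeasurable.mk ghat, hg.aemeasurable.measurable_mk, hg.aemeasurable.ae_eq_mk⟩
  have hgI : Integrable g μ := hg.congr hgg
  have hmeas_eq : ∀ s : ℝ, μ {x | s ≤ ghat x} = μ {x | s ≤ g x} := by
    intro s
    refine measure_congr ?_
    filter_upwards [hgg] with x hx
    change (s ≤ ghat x) = (s ≤ g x)
    rw [hx]
  have hlevel' : ∀ s : ℝ, μ {x | g x = s} = 0 := by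
    intro s
    have : μ {x | g x = s} = μ {x | ghat x = s} := by
      refine measure_congr ?_
      filter_upwards [hgg] with x hx
      change (g x = s) = (ghat x = s)
      rw [hx]
    rw [this]; exact hlevel s
  have hc' : c = sSup {s : ℝ | ENNReal.ofReal V ≤ μ {x | s ≤ g x}} := by
    rw [hc]
    congr 1
    ext s
    simp [hmeas_eq s]
  set S : Set ℝ := {s : ℝ | ENNReal.ofReal V ≤ μ {x | s ≤ g x}} with hS
  -- monotonicity of s ↦ μ {s ≤ g}
  have hanti : ∀ s t : ℝ, s ≤ t → μ {x | t ≤ g x} ≤ μ {x | s ≤ g x} := by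
    intro s t hst
    exact measure_mono fun x hx => le_trans hst hx
  -- S is nonempty
  have hSne : S.Nonempty := by
    have hmono : Monotone fun n : ℕ => {x | -(n:ℝ) ≤ g x} := by
      intro m n hmn x hx
      simp only [Set.mem_setOf_eq] at hx ⊢
      have : (m:ℝ) ≤ n := Nat.cast_le.mpr hmn
      linarith
    have hUnion : (⋃ n : ℕ, {x : Ω | -(n:ℝ) ≤ g x}) = Set.univ := by
      ext x
      simp only [Set.mem_iUnion, Set.mem_setOf_eq, Set.mem_univ, iff_true]
      obtain ⟨n, hn⟩ := exists_nat_ge (-(g x))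
      exact ⟨n, by linarith⟩
    have htend := tendsto_measure_iUnion_atTop (μ := μ) hmono
    rw [hUnion] at htend
    have hev := htend.eventually_const_lt hVlt
    obtain ⟨n, hn⟩ := hev.exists
    exact ⟨-(n:ℝ), hn.le⟩
  -- S is bounded above
  have hSbdd : BddAbove S := by
    have hantim : Antitone fun n : ℕ => {x | (n:ℝ) ≤ g x} := by
      intro m n hmn x hx
      simp only [Set.mem_setOf_eq] at hx ⊢
      have : (m:ℝ) ≤ n := Nat.cast_le.mpr hmn
      linarith
    have hInter : (⋂ n : ℕ, {x : Ω | (n:ℝ) ≤ g x}) = ∅ := by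
      ext x
      simp only [Set.mem_iInter, Set.mem_setOf_eq, Set.mem_empty_iff_false, iff_false, not_forall,
        not_le]
      obtain ⟨n, hn⟩ := exists_nat_gt (g x)
      exact ⟨n, hn⟩
    have htend := tendsto_measure_iInter_atTop (μ := μ)
      (fun n => (measurableSet_le measurable_const hgm).nullMeasurableSet) hantim
      ⟨0, measure_ne_top μ _⟩
    rw [hInter, measure_empty] at htend
    have hev := htend.eventually_lt_const (ENNReal.ofReal_pos.mpr hVpos)
    obtain ⟨N, hN⟩ := hev.exists
    refine ⟨N, fun s hs => ?_⟩
    by_contra hlt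
    push_neg at hlt
    have := le_trans hs (hanti _ _ hlt.le)
    exact absurd (lt_of_le_of_lt this hN) (lt_irrefl _)
  -- μ {c ≤ g} ≥ ofReal V
  have hlow : ENNReal.ofReal V ≤ μ {x | c ≤ g x} := by
    have hmem : ∀ s < c, ENNReal.ofReal V ≤ μ {x | s ≤ g x} := by
      intro s hs
      obtain ⟨t, htS, hst⟩ := exists_lt_of_lt_csSup hSne (hc' ▸ hs)
      exact le_trans htS (hanti _ _ hst.le)
    have hInter : (⋂ n : ℕ, {x : Ω | c - 1/(n+1:ℝ) ≤ g x}) = {x | c ≤ g x} := by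
      ext x
      simp only [Set.mem_iInter, Set.mem_setOf_eq]
      constructor
      · intro h
        by_contra hlt
        push_neg at hlt
        obtain ⟨n, hn⟩ := exists_nat_one_div_lt (show (0:ℝ) < c - g x by linarith)
        have := h n
        linarith
      · intro h n
        have : (0:ℝ) < 1/(n+1:ℝ) := by positivity
        linarith
    have hantim : Antitone fun n : ℕ => {x : Ω | c - 1/(n+1:ℝ) ≤ g x} := by
      intro m n hmn x hx
      simp only [Set.mem_setOf_eq] at hx ⊢
      have h1 : 1/(n+1:ℝ) ≤ 1/(m+1:ℝ) := by
        apply one_div_le_one_div_of_le (by positivity)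
        exact_mod_cast by exact_mod_cast add_le_add_left (Nat.cast_le.mpr hmn) 1
      linarith
    have htend := tendsto_measure_iInter_atTop (μ := μ)
      (fun n => (measurableSet_le measurable_const hgm).nullMeasurableSet) hantim
      ⟨0, measure_ne_top μ _⟩
    rw [hInter] at htend
    refine ge_of_tendsto' htend fun n => ?_
    refine hmem _ ?_
    have : (0:ℝ) < 1/(n+1:ℝ) := by positivity
    linarith
  -- μ {c ≤ g} ≤ ofReal V
  have hhigh : μ {x | c ≤ g x} ≤ ENNReal.ofReal V := by
    have hsub : {x | c ≤ g x} ⊆ {x | c < g x} ∪ {x | g x = c} := by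
      intro x hx
      rcases lt_or_eq_of_le (show c ≤ g x from hx) with h | h
      · exact Or.inl h
      · exact Or.inr h.symm
    have h1 : μ {x | c ≤ g x} ≤ μ {x | c < g x} := by
      calc μ {x | c ≤ g x} ≤ μ ({x | c < g x} ∪ {x | g x = c}) := measure_mono hsub
        _ ≤ μ {x | c < g x} + μ {x | g x = c} := measure_union_le _ _
        _ = μ {x | c < g x} := by rw [hlevel' c, add_zero]
    refine le_trans h1 ?_
    have hUnion : (⋃ n : ℕ, {x : Ω | c + 1/(n+1:ℝ) ≤ g x}) = {x | c < g x} := by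
      ext x
      simp only [Set.mem_iUnion, Set.mem_setOf_eq]
      constructor
      · rintro ⟨n, hn⟩
        have : (0:ℝ) < 1/(n+1:ℝ) := by positivity
        linarith
      · intro h
        obtain ⟨n, hn⟩ := exists_nat_one_div_lt (show (0:ℝ) < g x - c by linarith)
        exact ⟨n, by linarith⟩
    have hmono : Monotone fun n : ℕ => {x : Ω | c + 1/(n+1:ℝ) ≤ g x} := by
      intro m n hmn x hx
      simp only [Set.mem_setOf_eq] at hx ⊢
      have h1 : 1/(n+1:ℝ) ≤ 1/(m+1:ℝ) := by
        apply one_div_le_one_div_of_le (by positivity)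
        exact_mod_cast by exact_mod_cast add_le_add_left (Nat.cast_le.mpr hmn) 1
      linarith
    have htend := tendsto_measure_iUnion_atTop (μ := μ) hmono
    rw [hUnion] at htend
    refine le_of_tendsto' htend fun n => ?_
    by_contra hlt
    push_neg at hlt
    have hmemS : c + 1/(n+1:ℝ) ∈ S := le_of_lt hlt
    have := le_csSup hSbdd hmemS
    rw [← hc'] at this
    have hpos : (0:ℝ) < 1/(n+1:ℝ) := by positivity
    linarith
  have hDmeasure : μ {x | c ≤ g x} = ENNReal.ofReal V := le_antisymm hhigh hlow
  -- the candidate bang-bang function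
  set D' : Set Ω := {x | c ≤ g x} with hD'
  have hD'meas : MeasurableSet D' := measurableSet_le measurable_const hgm
  set fstar : Ω → ℝ := fun x => fm + (fp - fm) * D'.indicator 1 x with hfstar
  have hindint : Integrable (D'.indicator (1 : Ω → ℝ)) μ :=
    (integrable_const (1:ℝ)).indicator hD'meas
  have hfstarI : Integrable fstar μ := by
    exact (integrable_const fm).add (hindint.const_mul _)
  have hfstarB : fstar ∈ B := by
    rw [hB]
    refine ⟨?_, ?_, ?_⟩
    · exact measurable_const.add (measurable_const.mul (measurable_one.indicator hD'meas))
    · refine Filter.Eventually.of_forall fun x => ?_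
      by_cases hx : x ∈ D' <;> simp [hfstar, Set.indicator_apply, hx] <;> linarith
    · have : ∫ x, fstar x ∂μ
          = (μ Set.univ).toReal * fm + (fp - fm) * (μ D').toReal := by
        rw [hfstar]
        rw [integral_add (integrable_const fm) (hindint.const_mul _)]
        rw [integral_const, integral_const_mul]
        have : ∫ x, D'.indicator (1 : Ω → ℝ) x ∂μ = (μ D').toReal := by
          rw [show (1 : Ω → ℝ) = fun _ => (1:ℝ) from rfl, integral_indicator_const _ hD'meas]
          simp [Measure.real]
        rw [this]
        simp [smul_eq_mul, Measure.real]
      rw [this, hDmeasure, ENNReal.toReal_ofReal hVpos.le, hV]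
      field_simp
      ring
  -- pieces of the variational argument
  rw [hB] at hfhat
  obtain ⟨hfhatm, hfhatbd, hfhatint⟩ := hfhat
  have hfhatI : Integrable fhat μ := by
    refine Integrable.mono' (integrable_const fp) hfhatm.aestronglyMeasurable ?_
    filter_upwards [hfhatbd] with x ⟨ha, hb⟩
    rw [Real.norm_eq_abs, abs_of_pos (lt_of_lt_of_le h1 ha)]
    exact hb
  have hfstarg : Integrable (fun x => fstar x * g x) μ := by
    refine Integrable.bdd_mul (c := |fm| + |fp - fm|) hgI
      (measurable_const.add (measurable_const.mul
        (measurable_one.indicator hD'meas))).aestronglyMeasurable ?_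
    refine Filter.Eventually.of_forall fun x => ?_
    rw [Real.norm_eq_abs]
    refine le_trans (abs_add_le _ _) (add_le_add le_rfl ?_)
    rw [abs_mul]
    by_cases hx : x ∈ D' <;> simp [Set.indicator_apply, hx, abs_nonneg]
  have hfhatg : Integrable (fun x => fhat x * g x) μ := by
    refine Integrable.bdd_mul (c := fp) hgI hfhatm.aestronglyMeasurable ?_
    filter_upwards [hfhatbd] with x ⟨ha, hb⟩
    rw [Real.norm_eq_abs, abs_of_pos (lt_of_lt_of_le h1 ha)]
    exact hb
  -- the maximality inequality transferred to g
  have hIeq : ∀ f : Ω → ℝ, ∫ x, f x * ghat x ∂μ = ∫ x, f x * g x ∂μ := by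
    intro f
    refine integral_congr_ae ?_
    filter_upwards [hgg] with x hx
    rw [hx]
  have hkey : ∫ x, fstar x * g x ∂μ ≤ ∫ x, fhat x * g x ∂μ := by
    rw [← hIeq, ← hIeq]
    exact hmax fstar hfstarB
  -- ∫ fstar = ∫ fhat
  have hfeq : ∫ x, fstar x ∂μ = ∫ x, fhat x ∂μ := by
    rw [hfhatint]
    rw [hB] at hfstarB
    exact hfstarB.2.2
  -- nonnegative function with nonpositive integral
  set h : Ω → ℝ := fun x => (fstar x - fhat x) * (g x - c) with hh
  have hhI : Integrable h μ := by
    have h1' : Integrable (fun x => g x - c) μ := hgI.sub (integrable_const c)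
    refine Integrable.bdd_mul (c := |fm| + |fp - fm| + fp) h1'
      ((measurable_const.add (measurable_const.mul
        (measurable_one.indicator hD'meas))).sub hfhatm).aestronglyMeasurable ?_
    filter_upwards [hfhatbd] with x ⟨ha, hb⟩
    rw [Real.norm_eq_abs]
    refine le_trans (abs_sub _ _) (add_le_add ?_ ?_)
    · refine le_trans (abs_add_le _ _) (add_le_add le_rfl ?_)
      rw [abs_mul]
      by_cases hx : x ∈ D' <;> simp [Set.indicator_apply, hx, abs_nonneg]
    · rw [abs_of_pos (lt_of_lt_of_le h1 ha)]; exact hb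
  have hhnn : 0 ≤ᵐ[μ] h := by
    filter_upwards [hfhatbd] with x ⟨ha, hb⟩
    simp only [hh, Pi.zero_apply]
    by_cases hx : x ∈ D'
    · have hgx : c ≤ g x := hx
      have : fstar x = fp := by simp [hfstar, Set.indicator_apply, hx]
      rw [this]
      exact mul_nonneg (by linarith) (by linarith)
    · have hgx : g x < c := lt_of_not_ge hx
      have : fstar x = fm := by simp [hfstar, Set.indicator_apply, hx]
      rw [this]
      nlinarith
  have hhint : ∫ x, h x ∂μ ≤ 0 := by
    have hexp : ∫ x, h x ∂μ
        = (∫ x, fstar x * g x ∂μ - ∫ x, fhat x * g x ∂μ)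
          - c * (∫ x, fstar x ∂μ - ∫ x, fhat x ∂μ) := by
      have : h = fun x => (fstar x * g x - fhat x * g x) - c * (fstar x - fhat x) := by
        funext x; simp only [hh]; ring
      have hA : Integrable (fun x => fstar x * g x - fhat x * g x) μ := hfstarg.sub hfhatg
      have hB2 : Integrable (fun x => c * (fstar x - fhat x)) μ :=
        (hfstarI.sub hfhatI).const_mul c
      rw [this]
      rw [integral_sub hA hB2, integral_sub hfstarg hfhatg, integral_const_mul,
        integral_sub hfstarI hfhatI]
    rw [hexp, hfeq]
    simp only [sub_self, mul_zero, sub_zero]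
    linarith [hkey]
  have hzero : h =ᵐ[μ] 0 := by
    have h0' : ∫ x, h x ∂μ = 0 :=
      le_antisymm hhint (integral_nonneg_of_ae hhnn)
    exact (integral_eq_zero_iff_of_nonneg_ae hhnn hhI).mp h0'
  -- conclusion
  have hgnec : ∀ᵐ x ∂μ, g x ≠ c := by
    have := hlevel' c
    rw [ae_iff]
    simpa only [ne_eq, not_not] using this
  filter_upwards [hzero, hgnec, hgg] with x hx hne hgx
  have hfact : fstar x - fhat x = 0 ∨ g x - c = 0 := by
    have : (fstar x - fhat x) * (g x - c) = 0 := hx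
    exact mul_eq_zero.mp this
  have hfx : fhat x = fstar x := by
    rcases hfact with h | h
    · linarith
    · exact absurd (by linarith : g x = c) hne
  rw [hfx, hfstar]
  simp only
  congr 2
  rw [hD, hD']
  simp [Set.indicator_apply, Set.mem_setOf_eq, hgx]
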